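/- Let q ∈ ℂ with |q| = 1 and q not a root of unity, and let a, b, m ∈ ℕ with m ≤ a and m ≤ b. Then q^{bm − m² + m}·Σ_{i=0}^m q^{−(a+b+2−2m)i}·C_q(b−m+i, i)·C_q(a−i, m−i) = C_q(a+b+1−m, m). -/

import Mathlib

/-- The quantum integer `[k]_q = (q^k − q^{−k})/(q − q^{−1})`. -/
noncomputable def qint (q : ℂ) (k : ℤ) : ℂ := (q ^ k - q ^ (-k)) / (q - q⁻¹)

/-- The quantum binomial coefficient `C_q(n,k) = ∏_{j=1}^k [n−k+j]_q / [j]_q`. -/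
noncomputable def qbinom (q : ℂ) (n : ℤ) (k : ℕ) : ℂ :=
  ∏ j ∈ Finset.Icc 1 k, qint q (n - k + j) / qint q j

namespace SQ

variable {q : ℂ}

theorem qsub_ne (hq0 : q ≠ 0) (hne : ∀ n : ℤ, n ≠ 0 → q ^ n ≠ 1) : q - q⁻¹ ≠ 0 := by
  intro h
  have hiq : q = q⁻¹ := sub_eq_zero.mp h
  have h2 : q ^ (2:ℤ) = 1 := by
    rw [show (2:ℤ) = 1 + 1 by norm_num, zpow_add₀ hq0, zpow_one]
    nth_rewrite 2 [hiq]
    exact mul_inv_cancel₀ hq0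
  exact hne 2 (by norm_num) h2

theorem qint_ne_zero (hq0 : q ≠ 0) (hne : ∀ n : ℤ, n ≠ 0 → q ^ n ≠ 1)
    {k : ℤ} (hk : k ≠ 0) : qint q k ≠ 0 := by
  unfold qint
  apply div_ne_zero _ (qsub_ne hq0 hne)
  intro h
  have hk' : q ^ k = q ^ (-k) := by linear_combination h
  have h2 : q ^ (2*k) = 1 := by
    rw [two_mul, zpow_add₀ hq0]
    nth_rewrite 2 [hk']
    rw [← zpow_add₀ hq0]
    simp
  exact hne (2*k) (by omega) h2

theorem qint_zero : qint q 0 = 0 := by simp [qint]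

theorem qint_add (hq0 : q ≠ 0) (c d : ℤ) :
    qint q (c + d) = q ^ c * qint q d + q ^ (-d) * qint q c := by
  unfold qint
  rw [mul_div_assoc', mul_div_assoc', ← add_div]
  congr 1
  rw [zpow_add₀ hq0, neg_add, zpow_add₀ hq0]
  ring

noncomputable def pnum (q : ℂ) (n : ℤ) (k : ℕ) : ℂ :=
  ∏ j ∈ Finset.range k, qint q (n - k + 1 + j)

noncomputable def pden (q : ℂ) (k : ℕ) : ℂ :=
  ∏ j ∈ Finset.range k, qint q (1 + j)

theorem qbinom_eq (n : ℤ) (k : ℕ) : qbinom q n k = pnum q n k / pden q k := by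
  unfold qbinom pnum pden
  rw [← Finset.Ico_add_one_right_eq_Icc, Finset.prod_Ico_eq_prod_range, Finset.prod_div_distrib]
  simp only [Nat.succ_sub_one, Nat.add_sub_cancel]
  congr 1 <;> · apply Finset.prod_congr rfl; intro j _; congr 1; push_cast; ring

theorem pden_ne_zero (hq0 : q ≠ 0) (hne : ∀ n : ℤ, n ≠ 0 → q ^ n ≠ 1) (k : ℕ) :
    pden q k ≠ 0 := by
  unfold pden
  rw [Finset.prod_ne_zero_iff]
  intro j _
  exact qint_ne_zero hq0 hne (by positivity)

theorem pnum_succ_top (n : ℤ) (k : ℕ) : pnum q n (k+1) = qint q n * pnum q (n-1) k := by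
  unfold pnum
  rw [Finset.prod_range_succ, mul_comm]
  congr 1
  · congr 1; push_cast; ring
  · apply Finset.prod_congr rfl; intro j _; congr 1; push_cast; ring

theorem pnum_succ_bot (n : ℤ) (k : ℕ) : pnum q n (k+1) = qint q (n - k) * pnum q n k := by
  unfold pnum
  rw [Finset.prod_range_succ', mul_comm]
  congr 1
  · congr 1; push_cast; ring
  · apply Finset.prod_congr rfl; intro j _; congr 1; push_cast; ring

theorem pden_succ (k : ℕ) : pden q (k+1) = qint q ((k:ℤ)+1) * pden q k := by
  unfold pden
  rw [Finset.prod_range_succ, mul_comm]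
  congr 2
  push_cast; ring

theorem relA (n : ℤ) (k : ℕ) :
    qbinom q n (k+1) = qint q n / qint q ((k:ℤ)+1) * qbinom q (n-1) k := by
  rw [qbinom_eq, qbinom_eq, pnum_succ_top, pden_succ, mul_div_mul_comm]

theorem relB (n : ℤ) (k : ℕ) :
    qbinom q n (k+1) = qint q (n - k) / qint q ((k:ℤ)+1) * qbinom q n k := by
  rw [qbinom_eq, qbinom_eq, pnum_succ_bot, pden_succ, mul_div_mul_comm]

theorem qbinom_zero (n : ℤ) : qbinom q n 0 = 1 := by simp [qbinom]

theorem pascal2 (hq0 : q ≠ 0) (hne : ∀ n : ℤ, n ≠ 0 → q ^ n ≠ 1) (n : ℤ) (k : ℕ) :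
    qbinom q n (k+1)
      = q ^ (-((k:ℤ)+1)) * qbinom q (n-1) (k+1) + q ^ (n - k - 1) * qbinom q (n-1) k := by
  have hk1 : ((k:ℤ)+1) ≠ 0 := by positivity
  have hnz := qint_ne_zero hq0 hne hk1
  have hd : qint q n
      = q ^ (n - k - 1) * qint q ((k:ℤ)+1) + q ^ (-((k:ℤ)+1)) * qint q (n - k - 1) := by
    have h := qint_add hq0 (n - k - 1) ((k:ℤ)+1)
    rw [show (n - (k:ℤ) - 1 + ((k:ℤ) + 1)) = n by ring] at h
    exact h
  have hB : qbinom q (n-1) (k+1)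
      = qint q (n - k - 1) / qint q ((k:ℤ)+1) * qbinom q (n-1) k := by
    have h := relB (q := q) (n-1) k
    rw [show (n - 1 - (k:ℤ)) = n - k - 1 by ring] at h
    exact h
  rw [relA, hd, hB]
  field_simp
  ring

theorem qbinom_eq_zero (k : ℕ) (hk : 1 ≤ k) : qbinom q ((k:ℤ) - 1) k = 0 := by
  rw [qbinom_eq]
  have h : pnum q ((k:ℤ)-1) k = 0 := by
    apply Finset.prod_eq_zero (Finset.mem_range.mpr hk)
    rw [show ((k:ℤ) - 1 - (k:ℤ) + 1 + ((0:ℕ):ℤ)) = 0 by push_cast; ring]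
    exact qint_zero
  rw [h, zero_div]


theorem key (hq0 : q ≠ 0) (hne : ∀ n : ℤ, n ≠ 0 → q ^ n ≠ 1) :
    ∀ N : ℕ, ∀ r : ℤ, ∀ t m : ℕ, m + t ≤ N →
    q ^ ((r + 1) * (m:ℤ)) * ∑ i ∈ Finset.range (m+1),
        q ^ (-((r + t + 1) * (i:ℤ))) * qbinom q (r + i) i *
          qbinom q ((t:ℤ) - 1 + m - i) (m - i)
      = qbinom q (r + t + m) m := by
  intro N
  induction N with
  | zero =>
    intro r t m h
    obtain ⟨rfl, rfl⟩ : m = 0 ∧ t = 0 := by omega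
    simp [qbinom_zero]
  | succ N ih =>
    intro r t m h
    rcases m with _ | M
    · simp [qbinom_zero]
    rcases t with _ | T
    · -- t = 0
      rw [Finset.sum_range_succ]
      rw [Finset.sum_eq_zero (fun i hi => ?_), zero_add]
      · simp only [Nat.cast_zero, Nat.cast_add, Nat.cast_one, add_zero, Nat.sub_self,
          qbinom_zero, mul_one]
        rw [← mul_assoc, ← zpow_add₀ hq0, add_neg_cancel, zpow_zero, one_mul]
      · have e : (((0:ℕ):ℤ) - 1 + ((M+1:ℕ):ℤ) - (i:ℤ)) = ((M + 1 - i : ℕ):ℤ) - 1 := by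
          have : i ≤ M + 1 := by have := Finset.mem_range.mp hi; omega
          omega
        rw [e, qbinom_eq_zero (M + 1 - i) (by have := Finset.mem_range.mp hi; omega), mul_zero]
    · -- main case
      have IH1 := ih r (T+1) M (by omega)
      have IH2 := ih r T (M+1) (by omega)
      rw [Finset.sum_range_succ]
      have hstep : ∀ x ∈ Finset.range (M + 1),
          q ^ (-((r + ((T + 1 : ℕ) : ℤ) + 1) * (x:ℤ))) * qbinom q (r + (x:ℤ)) x *
              qbinom q (((T + 1 : ℕ) : ℤ) - 1 + ((M + 1 : ℕ) : ℤ) - (x:ℤ)) (M + 1 - x)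
            = q ^ ((T : ℤ)) * (q ^ (-((r + ((T + 1 : ℕ) : ℤ) + 1) * (x:ℤ))) *
                qbinom q (r + (x:ℤ)) x *
                qbinom q (((T + 1 : ℕ) : ℤ) - 1 + ((M : ℕ) : ℤ) - (x:ℤ)) (M - x))
              + q ^ (-(((M : ℕ) : ℤ) + 1)) * (q ^ (-((r + ((T : ℕ) : ℤ) + 1) * (x:ℤ))) *
                qbinom q (r + (x:ℤ)) x *
                qbinom q (((T : ℕ) : ℤ) - 1 + ((M + 1 : ℕ) : ℤ) - (x:ℤ)) (M + 1 - x)) := by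
        intro x hx
        have hx' : x ≤ M := by have := Finset.mem_range.mp hx; omega
        have hb : M + 1 - x = (M - x) + 1 := by omega
        have hp := pascal2 hq0 hne (((T + 1 : ℕ) : ℤ) - 1 + ((M + 1 : ℕ) : ℤ) - (x:ℤ)) (M - x)
        rw [hb, hp]
        rw [show (((T + 1 : ℕ) : ℤ) - 1 + ((M : ℕ) : ℤ) - (x:ℤ))
            = ((T + 1 : ℕ) : ℤ) - 1 + ((M + 1 : ℕ) : ℤ) - (x:ℤ) - 1 by push_cast; ring]
        rw [show (((T : ℕ) : ℤ) - 1 + ((M + 1 : ℕ) : ℤ) - (x:ℤ))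
            = ((T + 1 : ℕ) : ℤ) - 1 + ((M + 1 : ℕ) : ℤ) - (x:ℤ) - 1 by push_cast; ring]
        rw [show (((T + 1 : ℕ) : ℤ) - 1 + ((M + 1 : ℕ) : ℤ) - (x:ℤ) - ((M - x : ℕ) : ℤ) - 1)
            = ((T : ℕ) : ℤ) by push_cast [Nat.cast_sub hx']; ring]
        have hf : q ^ (-((r + ((T + 1 : ℕ) : ℤ) + 1) * (x:ℤ))) * q ^ (-(((M - x : ℕ) : ℤ) + 1))
            = q ^ (-(((M : ℕ) : ℤ) + 1)) * q ^ (-((r + ((T : ℕ) : ℤ) + 1) * (x:ℤ))) := by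
          rw [← zpow_add₀ hq0, ← zpow_add₀ hq0]
          congr 1
          push_cast [Nat.cast_sub hx']
          ring
        linear_combination (qbinom q (r + (x:ℤ)) x *
          qbinom q (((T + 1 : ℕ) : ℤ) - 1 + ((M + 1 : ℕ) : ℤ) - (x:ℤ) - 1) (M - x + 1)) * hf
      rw [Finset.sum_congr rfl hstep, Finset.sum_add_distrib, ← Finset.mul_sum, ← Finset.mul_sum]
      have hlast : q ^ (-((r + ((T + 1 : ℕ) : ℤ) + 1) * ((M + 1 : ℕ) : ℤ))) *
            qbinom q (r + ((M + 1 : ℕ) : ℤ)) (M + 1) *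
            qbinom q (((T + 1 : ℕ) : ℤ) - 1 + ((M + 1 : ℕ) : ℤ) - ((M + 1 : ℕ) : ℤ)) (M + 1 - (M + 1))
          = q ^ (-(((M : ℕ) : ℤ) + 1)) * (q ^ (-((r + ((T : ℕ) : ℤ) + 1) * ((M + 1 : ℕ) : ℤ))) *
              qbinom q (r + ((M + 1 : ℕ) : ℤ)) (M + 1) *
              qbinom q (((T : ℕ) : ℤ) - 1 + ((M + 1 : ℕ) : ℤ) - ((M + 1 : ℕ) : ℤ)) (M + 1 - (M + 1))) := by
        simp only [Nat.sub_self, qbinom_zero, mul_one]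
        rw [← mul_assoc]
        have hf2 : q ^ (-((r + ((T + 1 : ℕ) : ℤ) + 1) * ((M + 1 : ℕ) : ℤ)))
            = q ^ (-(((M : ℕ) : ℤ) + 1)) * q ^ (-((r + ((T : ℕ) : ℤ) + 1) * ((M + 1 : ℕ) : ℤ))) := by
          rw [← zpow_add₀ hq0]
          congr 1
          push_cast
          ring
        rw [hf2]
      rw [hlast]
      rw [Finset.sum_range_succ] at IH2
      have hpas := pascal2 hq0 hne (r + ((T + 1 : ℕ) : ℤ) + ((M + 1 : ℕ) : ℤ)) M
      rw [show (r + ((T + 1 : ℕ) : ℤ) + ((M : ℕ) : ℤ))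
          = r + ((T + 1 : ℕ) : ℤ) + ((M + 1 : ℕ) : ℤ) - 1 by push_cast; ring] at IH1
      rw [show (r + ((T : ℕ) : ℤ) + ((M + 1 : ℕ) : ℤ))
          = r + ((T + 1 : ℕ) : ℤ) + ((M + 1 : ℕ) : ℤ) - 1 by push_cast; ring] at IH2
      have hpow : q ^ ((r + 1) * ((M + 1 : ℕ) : ℤ)) * q ^ ((T : ℤ))
          = q ^ (r + ((T + 1 : ℕ) : ℤ) + ((M + 1 : ℕ) : ℤ) - ((M : ℕ) : ℤ) - 1) *
            q ^ ((r + 1) * ((M : ℕ) : ℤ)) := by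
        rw [← zpow_add₀ hq0, ← zpow_add₀ hq0]
        congr 1
        push_cast
        ring
      linear_combination (∑ x ∈ Finset.range (M + 1),
            q ^ (-((r + ((T + 1 : ℕ) : ℤ) + 1) * (x:ℤ))) * qbinom q (r + (x:ℤ)) x *
              qbinom q (((T + 1 : ℕ) : ℤ) - 1 + ((M : ℕ) : ℤ) - (x:ℤ)) (M - x)) * hpow
        + q ^ (r + ((T + 1 : ℕ) : ℤ) + ((M + 1 : ℕ) : ℤ) - ((M : ℕ) : ℤ) - 1) * IH1
        + q ^ (-(((M : ℕ) : ℤ) + 1)) * IH2 - hpas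

end SQ

/-- the quantum Vandermonde-type identity
`q^{bm−m²+m}·Σ_{i=0}^m q^{−(a+b+2−2m)i}·C_q(b−m+i,i)·C_q(a−i,m−i) = C_q(a+b+1−m,m)`. -/
theorem stmt_8 (q : ℂ) (hq : ‖q‖ = 1) (hroot : ∀ n : ℕ, 0 < n → q ^ n ≠ 1)
    (a b m : ℕ) (hma : m ≤ a) (hmb : m ≤ b) :
    q ^ ((b : ℤ) * m - (m : ℤ) ^ 2 + m) *
        ∑ i ∈ Finset.range (m + 1),
          q ^ (-(((a : ℤ) + b + 2 - 2 * m) * i)) *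
            qbinom q ((b : ℤ) - m + i) i * qbinom q ((a : ℤ) - i) (m - i) =
      qbinom q ((a : ℤ) + b + 1 - m) m := by
  have hq0 : q ≠ 0 := by
    intro h; rw [h] at hq; simp at hq
  have hne : ∀ n : ℤ, n ≠ 0 → q ^ n ≠ 1 := by
    intro n hn h1
    rcases lt_or_gt_of_ne hn with h | h
    · have h2 : q ^ ((-n).toNat) = 1 := by
        rw [← zpow_natCast, Int.toNat_of_nonneg (by omega), zpow_neg, h1, inv_one]
      exact hroot _ (by omega) h2
    · have h2 : q ^ (n.toNat) = 1 := by
        rw [← zpow_natCast, Int.toNat_of_nonneg (by omega)]; exact h1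
      exact hroot _ (by omega) h2
  have hk := SQ.key hq0 hne (m + (a - m + 1)) ((b:ℤ) - (m:ℤ)) (a - m + 1) m le_rfl
  have hterm : ∀ i ∈ Finset.range (m + 1),
      q ^ (-(((a : ℤ) + b + 2 - 2 * m) * i)) *
          qbinom q ((b : ℤ) - m + i) i * qbinom q ((a : ℤ) - i) (m - i)
      = q ^ (-(((b:ℤ) - (m:ℤ) + ((a - m + 1 : ℕ) : ℤ) + 1) * (i:ℤ))) *
          qbinom q ((b:ℤ) - (m:ℤ) + (i:ℤ)) i *
          qbinom q (((a - m + 1 : ℕ) : ℤ) - 1 + ((m:ℕ) : ℤ) - (i:ℤ)) (m - i) := by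
    intro i _
    congr 2
    · congr 1
      push_cast [Nat.cast_sub hma]
      ring
    · omega
  rw [show ((b : ℤ) * m - (m : ℤ) ^ 2 + m) = ((b:ℤ) - (m:ℤ) + 1) * (m:ℤ) by ring,
    Finset.sum_congr rfl hterm, hk]
  congr 1
  omega
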